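/- Let (Ω,σ) be a minimal topological dynamical system, u ∈ C⁰(Ω), and μ₀, μ₁ two ergodic σ-invariant probability measures. Then there exists a residual subset M ⊆ Ω such that for every ω ∈ M there is a strictly increasing sequence of integers (N_p)_{p≥1} with N_p < ln(N_{p+1}) for all p, and such that for every p ≥ 1 and every integer n with ln(N_p) < n < N_p, |(1/n) Σ_{k=0}^{n-1} u(σ^{k}(ω)) - ∫u dμ_{[p]}| < 1/p, where [p] = p mod 2. -/

import Mathlib

open MeasureTheory Filter Topology
open scoped ENNReal

noncomputable section

variable {Ω : Type*}

/-- `μ` is a `σ`-invariant Borel probability measure. -/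
def IsInvProb [MeasurableSpace Ω] (σ : Ω → Ω) (μ : Measure Ω) : Prop :=
  IsProbabilityMeasure μ ∧ Measure.map σ μ = μ

/-- The discounted solution `U_ε[f](ω) = -∑_{k≥0} (1-ε)^k f(σ^k ω)`. -/
def Udisc (σ : Ω → Ω) (f : Ω → ℝ) (ε : ℝ) (ω : Ω) : ℝ :=
  -∑' k : ℕ, (1 - ε) ^ k * f (σ^[k] ω)

/-- The discounted measure `μ_{ε,ω} = ∑_{k≥0} ε(1-ε)^k δ_{σ^k ω}`. -/
def discMeas [MeasurableSpace Ω] (σ : Ω → Ω) (ε : ℝ) (ω : Ω) : Measure Ω :=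
  Measure.sum fun k : ℕ => ENNReal.ofReal (ε * (1 - ε) ^ k) • Measure.dirac (σ^[k] ω)

/-- The empirical measure `A_{m,ω} = (1/m) ∑_{k=0}^{m-1} δ_{σ^k ω}`. -/
def empMeas [MeasurableSpace Ω] (σ : Ω → Ω) (m : ℕ) (ω : Ω) : Measure Ω :=
  ((m : ℝ≥0∞)⁻¹) • ∑ k ∈ Finset.range m, Measure.dirac (σ^[k] ω)

namespace Stmt15Aux

/-- Birkhoff average. -/
def bA (σ : Ω → Ω) (f : Ω → ℝ) (n : ℕ) (ω : Ω) : ℝ :=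
  (1 / (n : ℝ)) * ∑ k ∈ Finset.range n, f (σ^[k] ω)

section Top
variable [TopologicalSpace Ω] {σ : Ω → Ω} {f : Ω → ℝ}

lemma continuous_bA (hσ : Continuous σ) (hf : Continuous f) (n : ℕ) :
    Continuous (bA σ f n) :=
  continuous_const.mul (continuous_finset_sum _ fun k _ => hf.comp (hσ.iterate k))

end Top

variable {σ : Ω → Ω} {f : Ω → ℝ} {C : ℝ}

lemma abs_bA_le (hC : ∀ ω, |f ω| ≤ C) (hC0 : 0 ≤ C) (n : ℕ) (ω : Ω) :
    |bA σ f n ω| ≤ C := by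
  rcases Nat.eq_zero_or_pos n with rfl | hn
  · simp [bA, hC0]
  · have h1 : |∑ k ∈ Finset.range n, f (σ^[k] ω)| ≤ n * C := by
      calc |∑ k ∈ Finset.range n, f (σ^[k] ω)| ≤ ∑ k ∈ Finset.range n, |f (σ^[k] ω)| :=
        Finset.abs_sum_le_sum_abs _ _
      _ ≤ ∑ k ∈ Finset.range n, C := Finset.sum_le_sum fun k _ => hC _
      _ = n * C := by simp [mul_comm]
    have hn' : (0:ℝ) < n := by exact_mod_cast hn
    rw [bA, abs_mul, abs_of_pos (by positivity : (0:ℝ) < 1/(n:ℝ))]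
    calc 1/(n:ℝ) * |∑ k ∈ Finset.range n, f (σ^[k] ω)| ≤ 1/(n:ℝ) * (n * C) := by
          gcongr
      _ = C := by field_simp

lemma abs_bA_iterate_sub_le (hC : ∀ ω, |f ω| ≤ C) (j n : ℕ) (ω : Ω) :
    |bA σ f n (σ^[j] ω) - bA σ f n ω| ≤ 2 * C * j / n := by
  have hC0 : 0 ≤ C := le_trans (abs_nonneg _) (hC ω)
  rcases Nat.eq_zero_or_pos n with rfl | hn
  · simp [bA]
  have hn' : (0:ℝ) < n := by exact_mod_cast hn
  have key : ∑ k ∈ Finset.range n, f (σ^[k] (σ^[j] ω)) - ∑ k ∈ Finset.range n, f (σ^[k] ω)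
      = ∑ k ∈ Finset.range j, f (σ^[n + k] ω) - ∑ k ∈ Finset.range j, f (σ^[k] ω) := by
    have h1 : ∀ k, σ^[k] (σ^[j] ω) = σ^[k + j] ω := fun k =>
      (Function.iterate_add_apply σ k j ω).symm
    have h2 : ∑ k ∈ Finset.range (n + j), f (σ^[k] ω)
        = ∑ k ∈ Finset.range n, f (σ^[k] ω) + ∑ k ∈ Finset.range j, f (σ^[n + k] ω) :=
      Finset.sum_range_add (fun k => f (σ^[k] ω)) n j
    have h3 : ∑ k ∈ Finset.range (j + n), f (σ^[k] ω)
        = ∑ k ∈ Finset.range j, f (σ^[k] ω) + ∑ k ∈ Finset.range n, f (σ^[j + k] ω) :=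
      Finset.sum_range_add (fun k => f (σ^[k] ω)) j n
    simp only [h1]
    have : ∑ k ∈ Finset.range n, f (σ^[k + j] ω) = ∑ k ∈ Finset.range n, f (σ^[j + k] ω) := by
      refine Finset.sum_congr rfl fun k _ => by rw [add_comm]
    rw [this]
    have h4 : ∑ k ∈ Finset.range n, f (σ^[j + k] ω)
        = ∑ k ∈ Finset.range (j + n), f (σ^[k] ω) - ∑ k ∈ Finset.range j, f (σ^[k] ω) := by
      rw [h3]; ring
    rw [h4, add_comm j n, h2]; ring
  have habs : |∑ k ∈ Finset.range n, f (σ^[k] (σ^[j] ω)) - ∑ k ∈ Finset.range n, f (σ^[k] ω)|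
      ≤ 2 * C * j := by
    rw [key]
    have b1 : |∑ k ∈ Finset.range j, f (σ^[n + k] ω)| ≤ j * C := by
      calc |∑ k ∈ Finset.range j, f (σ^[n + k] ω)| ≤ ∑ k ∈ Finset.range j, |f (σ^[n + k] ω)| :=
        Finset.abs_sum_le_sum_abs _ _
      _ ≤ ∑ k ∈ Finset.range j, C := Finset.sum_le_sum fun k _ => hC _
      _ = j * C := by simp [mul_comm]
    have b2 : |∑ k ∈ Finset.range j, f (σ^[k] ω)| ≤ j * C := by
      calc |∑ k ∈ Finset.range j, f (σ^[k] ω)| ≤ ∑ k ∈ Finset.range j, |f (σ^[k] ω)| :=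
        Finset.abs_sum_le_sum_abs _ _
      _ ≤ ∑ k ∈ Finset.range j, C := Finset.sum_le_sum fun k _ => hC _
      _ = j * C := by simp [mul_comm]
    calc |_ - _| ≤ |∑ k ∈ Finset.range j, f (σ^[n + k] ω)| + |∑ k ∈ Finset.range j, f (σ^[k] ω)| :=
      abs_sub _ _
    _ ≤ j * C + j * C := add_le_add b1 b2
    _ = 2 * C * j := by ring
  have : bA σ f n (σ^[j] ω) - bA σ f n ω
      = (1/(n:ℝ)) * (∑ k ∈ Finset.range n, f (σ^[k] (σ^[j] ω)) - ∑ k ∈ Finset.range n, f (σ^[k] ω)) := by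
    rw [bA, bA]; ring
  rw [this, abs_mul, abs_of_pos (by positivity : (0:ℝ) < 1/(n:ℝ))]
  calc 1/(n:ℝ) * |∑ k ∈ Finset.range n, f (σ^[k] (σ^[j] ω)) - ∑ k ∈ Finset.range n, f (σ^[k] ω)|
      ≤ 1/(n:ℝ) * (2 * C * j) := by gcongr
    _ = 2 * C * j / n := by ring


/-- The "bad" set: no good average up to time `M`. -/
def Ebad (σ : Ω → Ω) (f : Ω → ℝ) (s : ℝ) (M : ℕ) : Set Ω :=
  {ω | ∀ n, 1 ≤ n → n ≤ M → bA σ f n ω ≤ s}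

/-- `bA n ω > s` for infinitely many `n`. -/
def Hset (σ : Ω → Ω) (f : Ω → ℝ) (s : ℝ) : Set Ω :=
  {ω | ∀ n₀ : ℕ, ∃ n, n₀ ≤ n ∧ 1 ≤ n ∧ s < bA σ f n ω}

section Meas
variable [TopologicalSpace Ω] [MeasurableSpace Ω] [BorelSpace Ω]
variable {σ : Ω → Ω} {f : Ω → ℝ}

lemma measurableSet_Ebad (hσ : Continuous σ) (hf : Continuous f) (s : ℝ) (M : ℕ) :
    MeasurableSet (Ebad σ f s M) := by
  have : Ebad σ f s M = ⋂ (n : ℕ) (_ : 1 ≤ n ∧ n ≤ M), {ω | bA σ f n ω ≤ s} := by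
    ext ω; simp [Ebad, forall_and]
  rw [this]
  exact MeasurableSet.iInter fun n => MeasurableSet.iInter fun _ =>
    (isClosed_le (continuous_bA hσ hf n) continuous_const).measurableSet

lemma measurableSet_Hset (hσ : Continuous σ) (hf : Continuous f) (s : ℝ) :
    MeasurableSet (Hset σ f s) := by
  have : Hset σ f s = ⋂ (n₀ : ℕ), ⋃ (n : ℕ) (_ : n₀ ≤ n ∧ 1 ≤ n), {ω | s < bA σ f n ω} := by
    ext ω
    constructor
    · intro h
      simp only [Set.mem_iInter, Set.mem_iUnion]
      intro n₀
      obtain ⟨n, h1, h2, h3⟩ := h n₀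
      exact ⟨n, ⟨h1, h2⟩, h3⟩
    · intro h n₀
      have := Set.mem_iInter.mp h n₀
      simp only [Set.mem_iUnion] at this
      obtain ⟨n, ⟨h1, h2⟩, h3⟩ := this
      exact ⟨n, h1, h2, h3⟩
  rw [this]
  exact MeasurableSet.iInter fun n₀ => MeasurableSet.iUnion fun n => MeasurableSet.iUnion fun _ =>
    (isOpen_lt continuous_const (continuous_bA hσ hf n)).measurableSet

end Meas

section KW
variable [TopologicalSpace Ω] [MeasurableSpace Ω] [BorelSpace Ω]
variable {σ : Ω → Ω} {f : Ω → ℝ} {μ : Measure Ω} {C : ℝ}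

/-- The covering inequality, by strong induction. -/
lemma kw_cover (hC : ∀ ω, |f ω| ≤ C) {s : ℝ} {M : ℕ}
    (g : Ω → ℝ) (hg : g = Set.indicator (Ebad σ f s M) (fun _ => (1:ℝ))) :
    ∀ N : ℕ, ∀ ω : Ω,
      s * N - (C + |s|) * (∑ i ∈ Finset.range N, g (σ^[i] ω)) - (C + |s|) * M
        ≤ ∑ k ∈ Finset.range N, f (σ^[k] ω) := by
  rcases isEmpty_or_nonempty Ω with hemp | hne
  · exact fun N ω => (IsEmpty.false ω).elim
  have hC0 : 0 ≤ C := le_trans (abs_nonneg _) (hC (Classical.arbitrary Ω))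
  have hC' : 0 ≤ C + |s| := by positivity
  have hg0 : ∀ ω, 0 ≤ g ω := by
    intro ω; rw [hg]; exact Set.indicator_nonneg (fun _ _ => zero_le_one) ω
  intro N
  induction N using Nat.strong_induction_on with
  | _ N IH =>
    intro ω
    rcases Nat.eq_zero_or_pos N with rfl | hN
    · simp [mul_nonneg hC' (Nat.cast_nonneg M)]
    by_cases hw : ω ∈ Ebad σ f s M
    · -- length-1 step
      obtain ⟨N', rfl⟩ : ∃ N', N = N' + 1 := ⟨N - 1, (Nat.succ_pred_eq_of_pos hN).symm⟩
      have hsum : ∑ k ∈ Finset.range (N' + 1), f (σ^[k] ω)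
          = (∑ k ∈ Finset.range N', f (σ^[k] (σ ω))) + f ω := by
        rw [Finset.sum_range_succ' (fun k => f (σ^[k] ω)) N']
        simp [Function.iterate_succ_apply]
      have hgsum : ∑ i ∈ Finset.range (N' + 1), g (σ^[i] ω)
          = (∑ i ∈ Finset.range N', g (σ^[i] (σ ω))) + g ω := by
        rw [Finset.sum_range_succ' (fun i => g (σ^[i] ω)) N']
        simp [Function.iterate_succ_apply]
      have hIH := IH N' (Nat.lt_succ_self N') (σ ω)
      have hgω : g ω = 1 := by rw [hg]; simp [Set.indicator_of_mem hw]
      have hfω : -C ≤ f ω := neg_le_of_abs_le (hC ω)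
      rw [hsum, hgsum, hgω]
      push_cast
      linarith [hIH, le_abs_self s]
    · -- there is a good block
      rw [Ebad, Set.mem_setOf_eq] at hw
      push_neg at hw
      obtain ⟨n, hn1, hnM, hbn⟩ := hw
      have hn0 : (0:ℝ) < n := by exact_mod_cast hn1
      have hblock : (n : ℝ) * s < ∑ k ∈ Finset.range n, f (σ^[k] ω) := by
        have := hbn
        rw [bA] at this
        calc (n:ℝ) * s < (n:ℝ) * ((1/(n:ℝ)) * ∑ k ∈ Finset.range n, f (σ^[k] ω)) := by
              exact (mul_lt_mul_iff_right₀ hn0).2 this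
          _ = ∑ k ∈ Finset.range n, f (σ^[k] ω) := by field_simp
      by_cases hnN : n ≤ N
      · obtain ⟨m, rfl⟩ : ∃ m, N = n + m := ⟨N - n, (Nat.add_sub_cancel' hnN).symm⟩
        have hm : m < n + m := by omega
        have hIH := IH m hm (σ^[n] ω)
        have hsum : ∑ k ∈ Finset.range (n + m), f (σ^[k] ω)
            = ∑ k ∈ Finset.range n, f (σ^[k] ω) + ∑ k ∈ Finset.range m, f (σ^[k] (σ^[n] ω)) := by
          rw [Finset.sum_range_add (fun k => f (σ^[k] ω)) n m]
          congr 1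
          exact Finset.sum_congr rfl fun k _ => by
            rw [add_comm n k, Function.iterate_add_apply]
        have hgsum : ∑ i ∈ Finset.range m, g (σ^[i] (σ^[n] ω))
            ≤ ∑ i ∈ Finset.range (n + m), g (σ^[i] ω) := by
          rw [Finset.sum_range_add (fun i => g (σ^[i] ω)) n m]
          have h1 : ∑ i ∈ Finset.range m, g (σ^[i] (σ^[n] ω))
              = ∑ i ∈ Finset.range m, g (σ^[n + i] ω) := by
            exact Finset.sum_congr rfl fun k _ => by
              rw [add_comm n k, Function.iterate_add_apply]
          rw [h1]
          have h2 : 0 ≤ ∑ i ∈ Finset.range n, g (σ^[i] ω) :=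
            Finset.sum_nonneg fun i _ => hg0 _
          linarith
        rw [hsum]
        push_cast
        linarith [hIH, hblock, mul_le_mul_of_nonneg_left hgsum hC']
      · -- n > N, so N < M; bound trivially
        push_neg at hnN
        have hNM : (N : ℝ) ≤ M := by
          have : N < M + 1 := by omega
          exact_mod_cast Nat.lt_succ_iff.mp this
        have hfsum : -(C * N) ≤ ∑ k ∈ Finset.range N, f (σ^[k] ω) := by
          have : ∀ k ∈ Finset.range N, -C ≤ f (σ^[k] ω) := fun k _ => neg_le_of_abs_le (hC _)
          calc -(C * N) = ∑ _k ∈ Finset.range N, (-C) := by simp [mul_comm]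
            _ ≤ _ := Finset.sum_le_sum this
        have hgsum : 0 ≤ ∑ i ∈ Finset.range N, g (σ^[i] ω) :=
          Finset.sum_nonneg fun i _ => hg0 _
        have hs : s ≤ |s| := le_abs_self s
        have hN0 : (0:ℝ) ≤ N := Nat.cast_nonneg N
        have k1 : (s + C) * N ≤ (C + |s|) * N :=
          mul_le_mul_of_nonneg_right (by linarith) hN0
        have k2 : (C + |s|) * N ≤ (C + |s|) * M := mul_le_mul_of_nonneg_left hNM hC'
        have k3 : 0 ≤ (C + |s|) * ∑ i ∈ Finset.range N, g (σ^[i] ω) :=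
          mul_nonneg hC' hgsum
        nlinarith [hfsum]

lemma integrable_of_bound [IsFiniteMeasure μ] (hf : Continuous f) (hC : ∀ ω, |f ω| ≤ C) :
    Integrable f μ :=
  ⟨hf.aestronglyMeasurable,
    HasFiniteIntegral.of_bounded (C := C) (ae_of_all _ fun ω => by
      simpa [Real.norm_eq_abs] using hC ω)⟩

lemma integral_comp_iterate (hmp : MeasurePreserving σ μ μ) {g : Ω → ℝ}
    (hg : AEStronglyMeasurable g μ) (k : ℕ) :
    ∫ ω, g (σ^[k] ω) ∂μ = ∫ ω, g ω ∂μ := by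
  have h := hmp.iterate k
  calc ∫ ω, g (σ^[k] ω) ∂μ = ∫ x, g x ∂(Measure.map σ^[k] μ) :=
        (integral_map h.measurable.aemeasurable (by rw [h.map_eq]; exact hg)).symm
    _ = ∫ x, g x ∂μ := by rw [h.map_eq]

lemma integrable_comp_iterate' (hmp : MeasurePreserving σ μ μ) {g : Ω → ℝ}
    (hg : Integrable g μ) (k : ℕ) : Integrable (fun ω => g (σ^[k] ω)) μ := by
  have h := hmp.iterate k
  have := (integrable_map_measure (by rw [h.map_eq]; exact hg.aestronglyMeasurable)
    h.measurable.aemeasurable).mp (by rw [h.map_eq]; exact hg)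
  exact this

lemma kw_main [IsProbabilityMeasure μ] (hσ : Continuous σ) (hf : Continuous f)
    (hmp : MeasurePreserving σ μ μ) (hC : ∀ ω, |f ω| ≤ C) (s : ℝ)
    (hH : μ (Hset σ f s) = 1) : s ≤ ∫ x, f x ∂μ := by
  rcases isEmpty_or_nonempty Ω with hemp | hne
  ·
    rw [Set.eq_empty_of_isEmpty (Hset σ f s)] at hH
    simp at hH
  have hC0 : 0 ≤ C := le_trans (abs_nonneg _) (hC (Classical.arbitrary Ω))
  set I := ∫ x, f x ∂μ with hI
  apply le_of_forall_pos_le_add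
  intro δ hδ
  set C' := C + |s| with hC'def
  have hC' : 0 ≤ C' := by positivity
  set ε := δ / (C' + 1) with hεdef
  have hε : 0 < ε := by positivity
  -- choose M with μ (Ebad σ f s M) small
  have hEmeas : ∀ M : ℕ, MeasurableSet (Ebad σ f s M) := measurableSet_Ebad hσ hf s
  have hanti : Antitone (fun M : ℕ => Ebad σ f s M) := by
    intro a b hab ω hω n h1 h2
    exact hω n h1 (le_trans h2 hab)
  have hinter : (⋂ M : ℕ, Ebad σ f s M) ⊆ (Hset σ f s)ᶜ := by
    intro ω hω hmem
    obtain ⟨n, -, h1, h3⟩ := hmem 0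
    exact absurd h3 (not_lt.2 ((Set.mem_iInter.mp hω n) n h1 le_rfl))
  have hμinter : μ (⋂ M : ℕ, Ebad σ f s M) = 0 := by
    refine le_antisymm (le_trans (measure_mono hinter) ?_) zero_le
    rw [measure_compl (measurableSet_Hset hσ hf s) (measure_ne_top μ _), hH]
    simp
  have htend := tendsto_measure_iInter_atTop
    (fun M => (hEmeas M).nullMeasurableSet) hanti ⟨0, measure_ne_top μ _⟩
  rw [hμinter] at htend
  obtain ⟨M, hM⟩ := (htend.eventually_lt_const (ENNReal.ofReal_pos.2 hε)).exists
  set E := Ebad σ f s M with hEdef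
  set g : Ω → ℝ := Set.indicator E (fun _ => (1:ℝ)) with hgdef
  have hgmeas : AEStronglyMeasurable g μ :=
    ((measurable_const.indicator (hEmeas M))).aestronglyMeasurable
  have hgint : Integrable g μ := (integrable_const (1:ℝ)).indicator (hEmeas M)
  have hfint : Integrable f μ := integrable_of_bound hf hC
  set e := (μ E).toReal with hedef
  have he0 : 0 ≤ e := ENNReal.toReal_nonneg
  have heε : e ≤ ε := by
    rw [hedef]
    calc (μ E).toReal ≤ (ENNReal.ofReal ε).toReal :=
          ENNReal.toReal_mono ENNReal.ofReal_ne_top hM.le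
      _ = ε := ENNReal.toReal_ofReal hε.le
  have claim := kw_cover hC g hgdef
  -- integrals of the Birkhoff sums
  have hfk : ∀ k : ℕ, Integrable (fun ω => f (σ^[k] ω)) μ := fun k =>
    integrable_comp_iterate' hmp hfint k
  have hgk : ∀ k : ℕ, Integrable (fun ω => g (σ^[k] ω)) μ := fun k =>
    integrable_comp_iterate' hmp hgint k
  have inta : ∀ N : ℕ, ∫ ω, ∑ k ∈ Finset.range N, f (σ^[k] ω) ∂μ = N * I := by
    intro N
    rw [integral_finset_sum _ (fun k _ => hfk k)]
    have : ∀ k, ∫ ω, f (σ^[k] ω) ∂μ = I := fun k =>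
      integral_comp_iterate hmp hf.aestronglyMeasurable k
    simp [this]
  have intg : ∀ N : ℕ, ∫ ω, ∑ i ∈ Finset.range N, g (σ^[i] ω) ∂μ = N * e := by
    intro N
    rw [integral_finset_sum _ (fun k _ => hgk k)]
    have h1 : ∀ k, ∫ ω, g (σ^[k] ω) ∂μ = e := by
      intro k
      rw [integral_comp_iterate hmp hgmeas k, hgdef,
        integral_indicator_const (1:ℝ) (hEmeas M)]
      simp [hedef]; rfl
    simp [h1]
  have intmono : ∀ N : ℕ, s * N - C' * (N * e) - C' * M ≤ N * I := by
    intro N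
    have hsumint : Integrable (fun ω => ∑ i ∈ Finset.range N, g (σ^[i] ω)) μ :=
      integrable_finset_sum _ (fun k _ => hgk k)
    have hlhs : Integrable
        (fun ω => s * N - C' * (∑ i ∈ Finset.range N, g (σ^[i] ω)) - C' * M) μ := by
      apply Integrable.sub _ (integrable_const _)
      exact Integrable.sub (integrable_const _) (hsumint.const_mul _)
    have hrhs : Integrable (fun ω => ∑ k ∈ Finset.range N, f (σ^[k] ω)) μ :=
      integrable_finset_sum _ (fun k _ => hfk k)
    have h1 := integral_mono hlhs hrhs (fun ω => claim N ω)
    rw [inta N] at h1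
    have heq : (fun ω => s * (N:ℝ) - C' * (∑ i ∈ Finset.range N, g (σ^[i] ω)) - C' * (M:ℝ))
        = fun ω => (s * (N:ℝ) - C' * (M:ℝ)) - C' * (∑ i ∈ Finset.range N, g (σ^[i] ω)) := by
      funext ω; ring
    rw [heq] at h1
    rw [integral_sub (integrable_const _) (hsumint.const_mul _),
      integral_const_mul, intg N, integral_const] at h1
    simp only [probReal_univ, measure_univ, ENNReal.toReal_one, smul_eq_mul, one_mul] at h1
    linarith [h1]
  -- let N → ∞
  have hNlim : s - C' * e ≤ I := by
    have htto : Tendsto (fun N : ℕ => s - C' * e - C' * M / N) atTop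
        (𝓝 (s - C' * e - 0)) :=
      tendsto_const_nhds.sub (tendsto_const_div_atTop_nhds_zero_nat (C' * M))
    rw [sub_zero] at htto
    refine le_of_tendsto htto ?_
    filter_upwards [eventually_ge_atTop 1] with N hN
    have hN0 : (0:ℝ) < N := by exact_mod_cast hN
    have h3 : s - C' * e - I ≤ C' * M / N := by
      rw [le_div_iff₀ hN0]
      nlinarith [intmono N]
    linarith
  have hfin : C' * ε ≤ δ := by
    rw [hεdef, mul_div_assoc']
    rw [div_le_iff₀ (by positivity : (0:ℝ) < C' + 1)]
    nlinarith
  have : C' * e ≤ C' * ε := mul_le_mul_of_nonneg_left heε hC'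
  linarith


lemma bA_neg (n : ℕ) (ω : Ω) : bA σ (fun x => -(f x)) n ω = -(bA σ f n ω) := by
  simp [bA, Finset.sum_neg_distrib]

lemma Hset_mono {a b : ℝ} (hab : a ≤ b) : Hset σ f b ⊆ Hset σ f a := by
  intro ω hω n₀
  obtain ⟨n, h1, h2, h3⟩ := hω n₀
  exact ⟨n, h1, h2, lt_of_le_of_lt hab h3⟩

/-- main estimate for invariance of `Hset` -/
lemma Hset_step (hC : ∀ ω, |f ω| ≤ C) {a b : ℝ} (hab : a < b) (ω : Ω) :
    (ω ∈ Hset σ f b → σ ω ∈ Hset σ f a) ∧ (σ ω ∈ Hset σ f b → ω ∈ Hset σ f a) := by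
  have hC0 : 0 ≤ C := le_trans (abs_nonneg _) (hC ω)
  have key : ∀ n : ℕ, 1 ≤ n → |bA σ f n (σ ω) - bA σ f n ω| ≤ 2 * C / n := by
    intro n hn
    have h0 := abs_bA_iterate_sub_le (σ := σ) hC 1 n ω
    simpa [Function.iterate_one] using h0
  have hsmall : ∀ n : ℕ, (⌈2 * C / (b - a)⌉₊ + 1 : ℕ) ≤ n → 2 * C / n < b - a := by
    intro n hn
    have hn0 : (0:ℝ) < n := by
      have : (1:ℕ) ≤ n := le_trans (by omega) hn
      exact_mod_cast this
    have h1 : (2 * C / (b - a) : ℝ) < n := by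
      calc (2 * C / (b - a) : ℝ) ≤ (⌈2 * C / (b - a)⌉₊ : ℝ) := Nat.le_ceil _
        _ < n := by exact_mod_cast hn
    rw [div_lt_iff₀ hn0]
    rw [div_lt_iff₀ (by linarith : (0:ℝ) < b - a)] at h1
    linarith
  constructor
  · intro hω n₀
    obtain ⟨n, h1, h2, h3⟩ := hω (max n₀ (⌈2 * C / (b - a)⌉₊ + 1))
    refine ⟨n, le_trans (le_max_left _ _) h1, h2, ?_⟩
    have hk := key n h2
    have hsm := hsmall n (le_trans (le_max_right _ _) h1)
    have := abs_le.1 hk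
    linarith [this.1, this.2]
  · intro hω n₀
    obtain ⟨n, h1, h2, h3⟩ := hω (max n₀ (⌈2 * C / (b - a)⌉₊ + 1))
    refine ⟨n, le_trans (le_max_left _ _) h1, h2, ?_⟩
    have hk := key n h2
    have hsm := hsmall n (le_trans (le_max_right _ _) h1)
    have := abs_le.1 hk
    linarith [this.1, this.2]

lemma measurableSet_Hsets (hσ : Continuous σ) (hf : Continuous f) (s : ℝ) :
    MeasurableSet (⋂ k : ℕ, Hset σ f (s - 1/(k+1))) :=
  MeasurableSet.iInter fun k => measurableSet_Hset hσ hf _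

lemma hset_le [IsProbabilityMeasure μ] (hσ : Continuous σ) (hf : Continuous f)
    (he : Ergodic σ μ) (hC : ∀ ω, |f ω| ≤ C) {s : ℝ}
    (hs : μ (Hset σ f s) ≠ 0) : s ≤ ∫ x, f x ∂μ := by
  rcases isEmpty_or_nonempty Ω with hemp | hne
  · rw [Set.eq_empty_of_isEmpty (Hset σ f s)] at hs
    simp at hs
  have hC0 : 0 ≤ C := le_trans (abs_nonneg _) (hC (Classical.arbitrary Ω))
  set S := ⋂ k : ℕ, Hset σ f (s - 1/(k+1)) with hSdef
  have hone : ∀ k : ℕ, (0:ℝ) < 1/((k:ℝ)+1) := fun k => by positivity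
  have hsub : Hset σ f s ⊆ S :=
    Set.subset_iInter fun k => Hset_mono (by linarith [hone k])
  have hinv : σ ⁻¹' S = S := by
    ext ω
    simp only [Set.mem_preimage, hSdef, Set.mem_iInter]
    constructor
    · intro h k
      have hlt : s - 1/((k:ℝ)+1) < s - 1/((k:ℝ)+1+1) := by
        have : 1/((k:ℝ)+1+1) < 1/((k:ℝ)+1) := by
          apply one_div_lt_one_div_of_lt <;> linarith
        linarith
      have h2 := h (k+1)
      push_cast at h2
      exact (Hset_step hC hlt ω).2 h2
    · intro h k
      have hlt : s - 1/((k:ℝ)+1) < s - 1/((k:ℝ)+1+1) := by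
        have : 1/((k:ℝ)+1+1) < 1/((k:ℝ)+1) := by
          apply one_div_lt_one_div_of_lt <;> linarith
        linarith
      have h2 := h (k+1)
      push_cast at h2
      exact (Hset_step hC hlt ω).1 h2
  rcases he.toPreErgodic.ae_empty_or_univ (measurableSet_Hsets hσ hf s) hinv with h | h
  · exfalso
    have hz : μ S = 0 := (measure_congr h).trans measure_empty
    exact hs (le_antisymm (le_trans (measure_mono hsub) hz.le) zero_le)
  · have hSone : μ S = 1 := (measure_congr h).trans measure_univ
    have hk1 : ∀ k : ℕ, μ (Hset σ f (s - 1/(k+1))) = 1 := by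
      intro k
      refine le_antisymm prob_le_one ?_
      rw [← hSone]
      exact measure_mono (Set.iInter_subset _ k)
    have hkle : ∀ k : ℕ, s - 1/((k:ℝ)+1) ≤ ∫ x, f x ∂μ := by
      intro k
      have := kw_main hσ hf he.toMeasurePreserving hC _ (hk1 k)
      push_cast at this ⊢
      exact this
    apply le_of_forall_pos_le_add
    intro δ hδ
    obtain ⟨k, hk⟩ := exists_nat_one_div_lt hδ
    linarith [hkle k]

lemma birkhoff_ae [CompactSpace Ω] [IsProbabilityMeasure μ]
    (hσ : Continuous σ) (hf : Continuous f) (he : Ergodic σ μ) :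
    ∀ᵐ ω ∂μ, Tendsto (fun n => bA σ f n ω) atTop (𝓝 (∫ x, f x ∂μ)) := by
  rcases isEmpty_or_nonempty Ω with hemp | hne
  · exfalso
    have h1 : μ Set.univ = 1 := measure_univ
    rw [Set.univ_eq_empty_iff.2 hemp] at h1
    simp at h1
  obtain ⟨ωm, -, hmax⟩ := isCompact_univ.exists_isMaxOn Set.univ_nonempty
    hf.abs.continuousOn
  set C := |f ωm| with hCdef
  have hC : ∀ ω, |f ω| ≤ C := fun ω => hmax (Set.mem_univ ω)
  have hCneg : ∀ ω, |(fun x => -(f x)) ω| ≤ C := fun ω => by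
    simpa [abs_neg] using hC ω
  set I := ∫ x, f x ∂μ with hIdef
  have hIneg : ∫ x, -(f x) ∂μ = -I := integral_neg f
  have upper : ∀ k : ℕ, μ (Hset σ f (I + 1/(k+1))) = 0 := by
    intro k
    by_contra h
    have h2 := hset_le hσ hf he hC h
    have h3 : (0:ℝ) < 1/((k:ℝ)+1) := by positivity
    push_cast at h2
    linarith
  have lower : ∀ k : ℕ, μ (Hset σ (fun x => -(f x)) (-I + 1/(k+1))) = 0 := by
    intro k
    by_contra h
    have h2 := hset_le hσ hf.neg he hCneg h
    rw [show (∫ x, (-f) x ∂μ) = -I from hIneg] at h2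
    have h3 : (0:ℝ) < 1/((k:ℝ)+1) := by positivity
    push_cast at h2
    linarith
  have hae1 : ∀ᵐ ω ∂μ, ∀ k : ℕ, ω ∉ Hset σ f (I + 1/(k+1)) :=
    ae_all_iff.2 fun k => measure_eq_zero_iff_ae_notMem.mp (upper k)
  have hae2 : ∀ᵐ ω ∂μ, ∀ k : ℕ, ω ∉ Hset σ (fun x => -(f x)) (-I + 1/(k+1)) :=
    ae_all_iff.2 fun k => measure_eq_zero_iff_ae_notMem.mp (lower k)
  filter_upwards [hae1, hae2] with ω h1 h2
  rw [Metric.tendsto_atTop]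
  intro ε hε
  obtain ⟨k, hk⟩ := exists_nat_one_div_lt hε
  have hn1 := h1 k
  have hn2 := h2 k
  simp only [Hset, Set.mem_setOf_eq, not_forall, not_exists, not_and, not_lt] at hn1 hn2
  obtain ⟨m₁, hm₁⟩ := hn1
  obtain ⟨m₂, hm₂⟩ := hn2
  refine ⟨max (max m₁ m₂) 1, fun n hn => ?_⟩
  have hnn1 : m₁ ≤ n := le_trans (le_trans (le_max_left _ _) (le_max_left _ _)) hn
  have hnn2 : m₂ ≤ n := le_trans (le_trans (le_max_right _ _) (le_max_left _ _)) hn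
  have hnn3 : 1 ≤ n := le_trans (le_max_right _ _) hn
  have hb1 : bA σ f n ω ≤ I + 1/((k:ℝ)+1) := by
    have := hm₁ n hnn1 hnn3
    push_cast at this ⊢
    exact this
  have hb2 : -(bA σ f n ω) ≤ -I + 1/((k:ℝ)+1) := by
    have := hm₂ n hnn2 hnn3
    rw [bA_neg] at this
    push_cast at this ⊢
    exact this
  rw [Real.dist_eq]
  have habs : |bA σ f n ω - I| ≤ 1/((k:ℝ)+1) :=
    abs_le.2 ⟨by linarith, by linarith⟩
  calc |bA σ f n ω - I| ≤ 1/((k:ℝ)+1) := habs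
    _ < ε := hk


/-- The open set of points with a good window at scale `≥ q`, accuracy `1/p`. -/
def Dset (σ : Ω → Ω) (u : Ω → ℝ) (I : ℝ) (p q : ℕ) : Set Ω :=
  {ω | ∃ N : ℕ, q ≤ N ∧ ∀ n : ℕ, Real.log N < n → n < N → |bA σ u n ω - I| < 1/(p:ℝ)}

lemma isOpen_Dset (hσ : Continuous σ) (hu : Continuous u) (I : ℝ) (p q : ℕ) :
    IsOpen (Dset σ u I p q) := by
  have hrw : Dset σ u I p q = ⋃ (N : ℕ) (_ : q ≤ N),
      ⋂ n ∈ Finset.range N, {ω | Real.log N < n → |bA σ u n ω - I| < 1/(p:ℝ)} := by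
    ext ω
    simp only [Dset, Set.mem_setOf_eq, Set.mem_iUnion, Set.mem_iInter]
    constructor
    · rintro ⟨N, hqN, h⟩
      exact ⟨N, hqN, fun n hn hlog => h n hlog (Finset.mem_range.mp hn)⟩
    · rintro ⟨N, hqN, h⟩
      exact ⟨N, hqN, fun n hlog hnN => h n (Finset.mem_range.mpr hnN) hlog⟩
  rw [hrw]
  refine isOpen_iUnion fun N => isOpen_iUnion fun _ => isOpen_biInter_finset fun n _ => ?_
  by_cases hc : Real.log N < n
  · simp only [hc, forall_true_left]
    have : Continuous fun ω => |bA σ u n ω - I| :=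
      ((continuous_bA hσ hu n).sub continuous_const).abs
    exact isOpen_lt this continuous_const
  · simp only [hc, false_implies]
    exact isOpen_univ

lemma dense_Dset [CompactSpace Ω] [IsProbabilityMeasure μ]
    (hσ : Continuous σ) (hu : Continuous u)
    (hmin : ∀ ω : Ω, Dense (Set.range fun n : ℕ => σ^[n] ω))
    (he : Ergodic σ μ) (p q : ℕ) (hp : 1 ≤ p) :
    Dense (Dset σ u (∫ x, u x ∂μ) p q) := by
  rcases isEmpty_or_nonempty Ω with hemp | hne
  · exfalso
    have h1 : μ Set.univ = 1 := measure_univ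
    rw [Set.univ_eq_empty_iff.2 hemp] at h1
    simp at h1
  set I := ∫ x, u x ∂μ with hIdef
  obtain ⟨ωm, -, hmax⟩ := isCompact_univ.exists_isMaxOn Set.univ_nonempty
    hu.abs.continuousOn
  set C := |u ωm| with hCdef
  have hC : ∀ ω, |u ω| ≤ C := fun ω => hmax (Set.mem_univ ω)
  obtain ⟨ω₀, hω₀⟩ := (birkhoff_ae hσ hu he).exists
  have horb : ∀ j : ℕ, Tendsto (fun n => bA σ u n (σ^[j] ω₀)) atTop (𝓝 I) := by
    intro j
    have hdiff : Tendsto (fun n => bA σ u n (σ^[j] ω₀) - bA σ u n ω₀) atTop (𝓝 0) := by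
      apply squeeze_zero_norm (fun n => abs_bA_iterate_sub_le (σ := σ) hC j n ω₀)
      exact tendsto_const_div_atTop_nhds_zero_nat (2 * C * j)
    have := hdiff.add hω₀
    rw [zero_add] at this
    refine this.congr fun n => by ring
  rw [dense_iff_inter_open]
  intro V hV hVne
  obtain ⟨x, ⟨j, rfl⟩, hxV⟩ := (hmin ω₀).exists_mem_open hV hVne
  refine ⟨σ^[j] ω₀, hxV, ?_⟩
  have hp' : (0:ℝ) < 1/(p:ℝ) := by
    have : (0:ℝ) < p := by exact_mod_cast hp
    positivity
  obtain ⟨n₀, hn₀⟩ := (Metric.tendsto_atTop.1 (horb j)) (1/(p:ℝ)) hp'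
  set N := max q (⌈Real.exp n₀⌉₊ + 1) with hNdef
  have hN1 : 1 ≤ N := le_trans (by omega) (le_max_right q _)
  have hNpos : (0:ℝ) < (N:ℝ) := by exact_mod_cast hN1
  refine ⟨N, le_max_left _ _, fun n hlog hnN => ?_⟩
  have hNr : Real.exp n₀ ≤ (N:ℝ) := by
    have h1 : Real.exp n₀ ≤ (⌈Real.exp n₀⌉₊ : ℝ) := Nat.le_ceil _
    have h2 : (⌈Real.exp n₀⌉₊ + 1 : ℕ) ≤ N := le_max_right _ _
    have h3 : ((⌈Real.exp n₀⌉₊ + 1 : ℕ) : ℝ) ≤ (N:ℝ) := by exact_mod_cast h2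
    push_cast at h3
    linarith
  have hlogN : (n₀ : ℝ) ≤ Real.log N := by
    rw [Real.le_log_iff_exp_le hNpos]
    exact hNr
  have hnn : n₀ ≤ n := by
    have : (n₀:ℝ) < (n:ℝ) := lt_of_le_of_lt hlogN hlog
    exact_mod_cast this.le
  have := hn₀ n hnn
  rwa [Real.dist_eq] at this

end KW

end Stmt15Aux

open Stmt15Aux in
/-- residual set of points whose Birkhoff averages oscillate between
`∫ u dμ₀` and `∫ u dμ₁` on alternating scales. -/
theorem stmt15 [MetricSpace Ω] [CompactSpace Ω] [MeasurableSpace Ω] [BorelSpace Ω]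
    (σ : Ω → Ω) (hσ : Continuous σ)
    (hmin : ∀ ω : Ω, Dense (Set.range fun n : ℕ => σ^[n] ω))
    (u : Ω → ℝ) (hu : Continuous u)
    (μ₀ μ₁ : Measure Ω) (h₀ : IsProbabilityMeasure μ₀) (h₁ : IsProbabilityMeasure μ₁)
    (he₀ : Ergodic σ μ₀) (he₁ : Ergodic σ μ₁) :
    ∃ M ∈ residual Ω, ∀ ω ∈ M, ∃ N : ℕ → ℕ, StrictMono N ∧
      (∀ p : ℕ, 1 ≤ p → (N p : ℝ) < Real.log (N (p + 1))) ∧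
      ∀ p : ℕ, 1 ≤ p → ∀ n : ℕ, Real.log (N p) < (n : ℝ) → n < N p →
        |(1 / (n : ℝ)) * ∑ k ∈ Finset.range n, u (σ^[k] ω)
          - ∫ x, u x ∂(if p % 2 = 0 then μ₀ else μ₁)| < 1 / (p : ℝ) := by
  haveI := h₀
  haveI := h₁
  classical
  refine ⟨⋂ (p : ℕ) (q : ℕ),
    (Dset σ u (∫ x, u x ∂μ₀) (p+1) q ∩ Dset σ u (∫ x, u x ∂μ₁) (p+1) q), ?_, ?_⟩
  · refine countable_iInter_mem.2 fun p => countable_iInter_mem.2 fun q =>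
      Filter.inter_mem ?_ ?_
    · exact residual_of_dense_open (isOpen_Dset hσ hu _ _ _)
        (dense_Dset hσ hu hmin he₀ (p+1) q (Nat.succ_le_succ (Nat.zero_le p)))
    · exact residual_of_dense_open (isOpen_Dset hσ hu _ _ _)
        (dense_Dset hσ hu hmin he₁ (p+1) q (Nat.succ_le_succ (Nat.zero_le p)))
  · intro ω hω
    have hmem : ∀ p q : ℕ, ω ∈ Dset σ u (∫ x, u x ∂μ₀) (p+1) q ∧
        ω ∈ Dset σ u (∫ x, u x ∂μ₁) (p+1) q := by
      intro p q
      have h1 := Set.mem_iInter.mp (Set.mem_iInter.mp hω p) q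
      exact ⟨h1.1, h1.2⟩
    have key : ∀ p : ℕ, 1 ≤ p → ∀ q : ℕ, ∃ N : ℕ, q ≤ N ∧ ∀ n : ℕ,
        Real.log N < (n:ℝ) → n < N →
        |bA σ u n ω - ∫ x, u x ∂(if p % 2 = 0 then μ₀ else μ₁)| < 1/(p:ℝ) := by
      intro p hp q
      obtain ⟨p', rfl⟩ : ∃ p', p = p' + 1 := ⟨p - 1, by omega⟩
      by_cases hpar : (p' + 1) % 2 = 0
      · rw [if_pos hpar]; exact (hmem p' q).1
      · rw [if_neg hpar]; exact (hmem p' q).2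
    set Ns : ℕ → ℕ := fun p => Nat.rec 0 (fun p Np =>
      Classical.choose (key (p+1) (Nat.succ_le_succ (Nat.zero_le p))
        (⌈Real.exp ((Np:ℝ) + 1)⌉₊ + 1))) p with hNs
    have hspec : ∀ p : ℕ,
        (⌈Real.exp ((Ns p : ℝ) + 1)⌉₊ + 1 ≤ Ns (p+1)) ∧ ∀ n : ℕ,
          Real.log (Ns (p+1)) < (n:ℝ) → n < Ns (p+1) →
          |bA σ u n ω - ∫ x, u x ∂(if (p+1) % 2 = 0 then μ₀ else μ₁)|
            < 1/(((p+1 : ℕ)):ℝ) :=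
      fun p => Classical.choose_spec (key (p+1) (Nat.succ_le_succ (Nat.zero_le p))
        (⌈Real.exp ((Ns p:ℝ) + 1)⌉₊ + 1))
    have hgrow : ∀ p : ℕ, (Ns p : ℝ) + 1 ≤ Real.log (Ns (p+1)) := by
      intro p
      have h1 := (hspec p).1
      have hpos1 : 1 ≤ Ns (p+1) := le_trans (by omega) h1
      have hpos : (0:ℝ) < (Ns (p+1) : ℝ) := by exact_mod_cast hpos1
      rw [Real.le_log_iff_exp_le hpos]
      have h2 : Real.exp ((Ns p:ℝ)+1) ≤ (⌈Real.exp ((Ns p:ℝ)+1)⌉₊ : ℝ) := Nat.le_ceil _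
      have h3 : ((⌈Real.exp ((Ns p:ℝ)+1)⌉₊ + 1 : ℕ) : ℝ) ≤ (Ns (p+1):ℝ) := by
        exact_mod_cast h1
      push_cast at h3
      linarith
    have hmono : StrictMono Ns := by
      apply strictMono_nat_of_lt_succ
      intro p
      have h1 := hgrow p
      have hpos1 : 1 ≤ Ns (p+1) := le_trans (by omega) (hspec p).1
      have hpos : (0:ℝ) < (Ns (p+1) : ℝ) := by exact_mod_cast hpos1
      have h2 : Real.log (Ns (p+1)) ≤ (Ns (p+1):ℝ) - 1 := Real.log_le_sub_one_of_pos hpos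
      have h3 : (Ns p : ℝ) < (Ns (p+1) : ℝ) := by linarith
      exact_mod_cast h3
    refine ⟨Ns, hmono, fun p hp => ?_, fun p hp n hlog hlt => ?_⟩
    · have h1 := hgrow p; linarith
    · obtain ⟨p', rfl⟩ : ∃ p', p = p' + 1 := ⟨p - 1, by omega⟩
      have h := (hspec p').2 n hlog hlt
      exact_mod_cast h
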